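/- Let G be a finite group acting on the set P = {(g,h) ∈ G × G : g*h = h*g} of commuting pairs by simultaneous conjugation, x · (g,h) = (x g x⁻¹, x h x⁻¹). Then the number of orbits of this action equals the sum, over a set of representatives g of the conjugacy classes of G, of the number of conjugacy classes of the centralizer C_G(g). -/
import Mathlib

namespace CardOrbitsAux

variable {G : Type*} [Group G]

/-- The relation of simultaneous conjugation on commuting pairs. -/
def R : {p : G × G // p.1 * p.2 = p.2 * p.1} → {p : G × G // p.1 * p.2 = p.2 * p.1} → Prop :=
  fun x y => ∃ g : G, g * x.val.1 * g⁻¹ = y.val.1 ∧ g * x.val.2 * g⁻¹ = y.val.2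

lemma R_equiv : Equivalence (R (G := G)) := by
  constructor
  · intro x; exact ⟨1, by simp, by simp⟩
  · rintro x y ⟨g, h1, h2⟩
    exact ⟨g⁻¹, by rw [← h1]; group, by rw [← h2]; group⟩
  · rintro x y z ⟨g, h1, h2⟩ ⟨k, k1, k2⟩
    exact ⟨k * g, by rw [← k1, ← h1]; group, by rw [← k2, ← h2]; group⟩

lemma quot_mk_eq_iff {x y : {p : G × G // p.1 * p.2 = p.2 * p.1}} :
    Quot.mk R x = Quot.mk R y ↔ R x y := by
  rw [Quot.eq]
  exact R_equiv.eqvGen_iff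

lemma conj_comm {a b : G} (z : G) (hab : a * b = b * a) :
    (z⁻¹ * a * z) * (z⁻¹ * b * z) = (z⁻¹ * b * z) * (z⁻¹ * a * z) := by
  simp only [mul_assoc, inv_mul_cancel_left, mul_inv_cancel_left]
  rw [← mul_assoc a b, hab, mul_assoc]

variable (rep : ConjClasses G → G)

/-- The forward map. -/
def f : (Σ c : ConjClasses G, ConjClasses (Subgroup.centralizer ({rep c} : Set G))) →
    Quot (R (G := G)) := fun p =>
  Quotient.liftOn p.2
    (fun h => Quot.mk R ⟨(rep p.1, (h : G)),
      (Subgroup.mem_centralizer_singleton_iff.mp h.2).symm⟩)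
    (by
      rintro a b hab
      obtain ⟨c, hc⟩ := isConj_iff.mp hab
      apply Quot.sound
      refine ⟨(c : G), ?_, ?_⟩
      · exact Subgroup.mem_centralizer_singleton_iff.mp c.2 ▸ by group
      · have := congrArg Subtype.val hc
        push_cast at this
        exact this)

lemma f_bijective (hrep : ∀ c : ConjClasses G, ConjClasses.mk (rep c) = c) :
    Function.Bijective (f rep) := by
  constructor
  · rintro ⟨c, d⟩ ⟨c', d'⟩ h
    obtain ⟨a, rfl⟩ := ConjClasses.mk_surjective d
    obtain ⟨b, rfl⟩ := ConjClasses.mk_surjective d'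
    obtain ⟨g, hg1, hg2⟩ := quot_mk_eq_iff.mp h
    simp only at hg1 hg2
    have hcc : c = c' := by
      rw [← hrep c, ← hrep c', ConjClasses.mk_eq_mk_iff_isConj]
      exact isConj_iff.mpr ⟨g, hg1⟩
    subst hcc
    have hgmem : g ∈ Subgroup.centralizer ({rep c} : Set G) := by
      rw [Subgroup.mem_centralizer_singleton_iff]
      rw [mul_inv_eq_iff_eq_mul] at hg1
      exact hg1
    refine Sigma.ext rfl ?_
    simp only [heq_eq_eq]
    rw [ConjClasses.mk_eq_mk_iff_isConj, isConj_iff]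
    refine ⟨⟨g, hgmem⟩, ?_⟩
    ext
    push_cast
    exact hg2
  · intro q
    obtain ⟨x, rfl⟩ := Quot.exists_rep q
    obtain ⟨⟨g, h⟩, hx⟩ := x
    simp only at hx
    set c := ConjClasses.mk g with hc
    have : IsConj (rep c) g := by
      rw [← ConjClasses.mk_eq_mk_iff_isConj, hrep c]
    obtain ⟨z, hz⟩ := isConj_iff.mp this
    have hrc : rep c = z⁻¹ * g * z := by rw [← hz]; group
    have hmem : z⁻¹ * h * z ∈ Subgroup.centralizer ({rep c} : Set G) := by
      rw [Subgroup.mem_centralizer_singleton_iff, hrc]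
      exact conj_comm z hx.symm
    refine ⟨⟨c, ConjClasses.mk ⟨z⁻¹ * h * z, hmem⟩⟩, ?_⟩
    show Quot.mk R ⟨(rep c, z⁻¹ * h * z), _⟩ = _
    apply Quot.sound
    refine ⟨z, ?_, ?_⟩
    · simpa using hz
    · simp only
      group

end CardOrbitsAux

/-- The number of orbits of simultaneous conjugation of a finite group G on its set of
commuting pairs equals the sum, over representatives of the conjugacy classes of G, of the
number of conjugacy classes of the corresponding centralizers. -/
theorem card_orbits_commuting_pairs {G : Type*} [Group G] [Fintype G]
    (rep : ConjClasses G → G) (hrep : ∀ c : ConjClasses G, ConjClasses.mk (rep c) = c) :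
    Nat.card (Quot (fun x y : {p : G × G // p.1 * p.2 = p.2 * p.1} =>
        ∃ g : G, g * x.val.1 * g⁻¹ = y.val.1 ∧ g * x.val.2 * g⁻¹ = y.val.2))
      = ∑ᶠ c : ConjClasses G,
          Nat.card (ConjClasses (Subgroup.centralizer {rep c})) := by
  classical
  have e := Equiv.ofBijective _ (CardOrbitsAux.f_bijective rep hrep)
  rw [show (fun x y : {p : G × G // p.1 * p.2 = p.2 * p.1} =>
        ∃ g : G, g * x.val.1 * g⁻¹ = y.val.1 ∧ g * x.val.2 * g⁻¹ = y.val.2) =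
      CardOrbitsAux.R from rfl]
  rw [← Nat.card_congr e]
  haveI : ∀ c : ConjClasses G, Fintype (ConjClasses (Subgroup.centralizer ({rep c} : Set G))) :=
    fun c => Fintype.ofFinite _
  haveI : Fintype (ConjClasses G) := Fintype.ofFinite _
  rw [Nat.card_eq_fintype_card, Fintype.card_sigma, finsum_eq_sum_of_fintype]
  exact Finset.sum_congr rfl fun c _ => (Nat.card_eq_fintype_card).symm
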